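/- Let A, c1, c2 be real numbers with 0 < c1 < c2 ≤ A, and set θ = (c2 − c1)/(A − c1). Then for every integer N ≥ 1 and every finite sequence of real numbers a_1, …, a_N satisfying a_j ≤ A for all 1 ≤ j ≤ N and ∑_{j=1}^N a_j ≥ c2·N, there exist an integer l with l ≥ θN and indices 1 ≤ n_1 < n_2 < ⋯ < n_l ≤ N such that for every i = 1, …, l and every integer n with 0 ≤ n < n_i one has ∑_{j=n+1}^{n_i} a_j ≥ c1·(n_i − n). -/

import Mathlib

/-- Pliss Lemma for real sequences. -/
theorem pliss_lemma (A c1 c2 : ℝ) (h1 : 0 < c1) (h2 : c1 < c2) (h3 : c2 ≤ A)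
    (N : ℕ) (hN : 1 ≤ N) (a : ℕ → ℝ) (ha : ∀ j, 1 ≤ j → j ≤ N → a j ≤ A)
    (hsum : c2 * N ≤ ∑ j ∈ Finset.Icc 1 N, a j) :
    ∃ l : ℕ, (c2 - c1) / (A - c1) * N ≤ (l : ℝ) ∧
      ∃ ns : Fin l → ℕ, StrictMono ns ∧ (∀ i, 1 ≤ ns i ∧ ns i ≤ N) ∧
        ∀ i : Fin l, ∀ m : ℕ, m < ns i →
          c1 * ((ns i : ℝ) - m) ≤ ∑ j ∈ Finset.Icc (m + 1) (ns i), a j := by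
  classical
  have hAc : (0:ℝ) < A - c1 := by linarith
  set S : ℕ → ℝ := fun n => ∑ j ∈ Finset.Icc 1 n, (a j - c1) with hSdef
  set Q : ℕ → Prop := fun n => ∀ m < n, S m ≤ S n with hQdef
  set T : Finset ℕ := (Finset.Icc 1 N).filter Q with hTdef
  have hins : ∀ n : ℕ, Finset.Icc 1 (n+1) = insert (n+1) (Finset.Icc 1 n) := by
    intro n; ext x; simp only [Finset.mem_Icc, Finset.mem_insert]; omega
  -- recurrence for S
  have hSsucc : ∀ n : ℕ, S (n + 1) = S n + (a (n+1) - c1) := by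
    intro n
    show (∑ j ∈ Finset.Icc 1 (n+1), (a j - c1)) = (∑ j ∈ Finset.Icc 1 n, (a j - c1)) + _
    rw [hins n, Finset.sum_insert (by simp)]
    ring
  -- difference formula
  have hdiff : ∀ m n : ℕ, m ≤ n → S n - S m = ∑ j ∈ Finset.Icc (m+1) n, (a j - c1) := by
    intro m n hmn
    have h1 : Finset.Icc 1 m = Finset.Ioc 0 m := by
      ext x; simp [Nat.lt_iff_add_one_le]
    have h2 : Finset.Icc 1 n = Finset.Ioc 0 n := by
      ext x; simp [Nat.lt_iff_add_one_le]
    have h3 : Finset.Icc (m+1) n = Finset.Ioc m n := by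
      ext x; simp only [Finset.mem_Icc, Finset.mem_Ioc]; omega
    have h4 := Finset.sum_Ioc_consecutive (fun j => a j - c1) (Nat.zero_le m) hmn
    show (∑ j ∈ Finset.Icc 1 n, (a j - c1)) - (∑ j ∈ Finset.Icc 1 m, (a j - c1)) = _
    rw [h1, h2, h3]
    linarith [h4]
  -- key counting lemma
  have key : ∀ n : ℕ, n ≤ N → ∀ m : ℕ, m ≤ n →
      S m ≤ (((Finset.Icc 1 n).filter Q).card : ℝ) * (A - c1) := by
    intro n
    induction n with
    | zero =>
      intro _ m hm
      interval_cases m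
      have : S 0 = 0 := by simp [hSdef]
      rw [this]
      positivity
    | succ n ih =>
      intro hnN m hm
      have hmono : (((Finset.Icc 1 n).filter Q).card : ℝ) ≤
          (((Finset.Icc 1 (n+1)).filter Q).card : ℝ) := by
        exact_mod_cast Finset.card_le_card (Finset.filter_subset_filter _
          (Finset.Icc_subset_Icc_right (by omega)))
      rcases Nat.lt_or_ge m (n+1) with hm' | hm'
      · have := ih (by omega) m (by omega)
        nlinarith
      · have hmn : m = n + 1 := by omega
        subst hmn
        by_cases hQ : Q (n+1)
        · have hcard : ((Finset.Icc 1 (n+1)).filter Q).card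
              = ((Finset.Icc 1 n).filter Q).card + 1 := by
            rw [hins n, Finset.filter_insert, if_pos hQ,
              Finset.card_insert_of_notMem (by simp [Finset.mem_filter])]
          have hSn := ih (by omega) n le_rfl
          have haN : a (n+1) ≤ A := ha (n+1) (by omega) hnN
          have hrec := hSsucc n
          rw [hcard]
          push_cast
          nlinarith
        · simp only [hQdef] at hQ
          push_neg at hQ
          obtain ⟨m', hm'lt, hm'gt⟩ := hQ
          have := ih (by omega) m' (by omega)
          nlinarith
  -- lower bound on S N
  have hSN : (c2 - c1) * N ≤ S N := by
    have hcard : (Finset.Icc 1 N).card = N := by simp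
    have : S N = (∑ j ∈ Finset.Icc 1 N, a j) - c1 * N := by
      show (∑ j ∈ Finset.Icc 1 N, (a j - c1)) = _
      rw [Finset.sum_sub_distrib, Finset.sum_const, hcard, nsmul_eq_mul]
      ring
    rw [this]; linarith
  -- membership facts for T
  have hmemT : ∀ x ∈ T, (1 ≤ x ∧ x ≤ N) ∧ Q x := by
    intro x hx
    rw [hTdef, Finset.mem_filter, Finset.mem_Icc] at hx
    exact hx
  refine ⟨T.card, ?_, ?_⟩
  · have hTN : S N ≤ (T.card : ℝ) * (A - c1) := key N le_rfl N le_rfl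
    rw [div_mul_eq_mul_div, div_le_iff₀ hAc]
    nlinarith
  · refine ⟨fun i => (T.orderIsoOfFin rfl i : ℕ), ?_, ?_, ?_⟩
    · intro i j hij
      exact (T.orderIsoOfFin rfl).strictMono hij
    · intro i
      exact (hmemT _ (T.orderIsoOfFin rfl i).2).1
    · intro i m hm
      simp only at hm ⊢
      set n := ((T.orderIsoOfFin rfl i) : ℕ) with hn
      have hQn : S m ≤ S n := (hmemT _ (T.orderIsoOfFin rfl i).2).2 m hm
      have hd := hdiff m n (le_of_lt hm)
      have hsplit : ∑ j ∈ Finset.Icc (m+1) n, (a j - c1)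
          = (∑ j ∈ Finset.Icc (m+1) n, a j) - c1 * ((Finset.Icc (m+1) n).card : ℝ) := by
        rw [Finset.sum_sub_distrib, Finset.sum_const, nsmul_eq_mul]
        ring
      have hcard : ((Finset.Icc (m+1) n).card : ℝ) = (n : ℝ) - m := by
        rw [Nat.card_Icc]
        have h5 : n + 1 - (m+1) = n - m := by omega
        rw [h5, Nat.cast_sub (le_of_lt hm)]
      rw [hcard] at hsplit
      rw [hsplit] at hd
      linarith
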